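/- Ky Fan's minimum principle: for a self-adjoint operator A on a finite-dimensional real inner product space with eigenvalues λ_1 ≤ λ_2 ≤ … ≤ λ_ν, for any 1 ≤ n ≤ ν, the mean (1/n)∑_{k=1}^n λ_k equals (1/n) times the minimum of ∑_{i=1}^n ⟨A f_i, f_i⟩ over all orthonormal systems f_1, …, f_n. -/

import Mathlib

open Finset RealInnerProductSpace

theorem ky_fan_minimum_principle {E : Type*} [NormedAddCommGroup E]
    [InnerProductSpace ℝ E] [FiniteDimensional ℝ E]
    (A : E →ₗ[ℝ] E) (hA : ∀ x y : E, ⟪A x, y⟫ = ⟪x, A y⟫)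
    (lam : Fin (Module.finrank ℝ E) → ℝ) (hmono : Monotone lam)
    (F : Fin (Module.finrank ℝ E) → E) (hON : Orthonormal ℝ F)
    (heig : ∀ k, A (F k) = lam k • F k)
    (n : ℕ) (hn : 0 < n) (hnν : n ≤ Module.finrank ℝ E) :
    (∑ i : Fin n, lam (Fin.castLE hnν i)) / n
      = (1 / n) * sInf {x : ℝ | ∃ f : Fin n → E,
          Orthonormal ℝ f ∧ x = ∑ i, ⟪A (f i), f i⟫} := by
  classical
  haveI : Nonempty (Fin (Module.finrank ℝ E)) := ⟨⟨0, lt_of_lt_of_le hn hnν⟩⟩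
  have hcard : Fintype.card (Fin (Module.finrank ℝ E)) = Module.finrank ℝ E := by simp
  let b : OrthonormalBasis (Fin (Module.finrank ℝ E)) ℝ E :=
    (basisOfOrthonormalOfCardEqFinrank hON hcard).toOrthonormalBasis
      (by rwa [coe_basisOfOrthonormalOfCardEqFinrank])
  have hb : ∀ k, b k = F k := fun k => by
    simp [b, Module.Basis.coe_toOrthonormalBasis, coe_basisOfOrthonormalOfCardEqFinrank]
  -- expansion of the quadratic form in the eigenbasis
  have hexp : ∀ x : E, ⟪A x, x⟫ = ∑ k, lam k * ⟪x, F k⟫ ^ 2 := by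
    intro x
    rw [← b.sum_inner_mul_inner (A x) x]
    refine Finset.sum_congr rfl fun k _ => ?_
    rw [hb, hA, heig, real_inner_smul_right, real_inner_comm]
    ring
  have hpars : ∀ x : E, ∑ k, ⟪x, F k⟫ ^ 2 = ‖x‖ ^ 2 := by
    intro x
    have h := b.sum_inner_mul_inner x x
    rw [real_inner_self_eq_norm_sq] at h
    rw [← h]
    refine Finset.sum_congr rfl fun k _ => ?_
    rw [hb, real_inner_comm x (F k)]
    ring
  set m : ℝ := ∑ i : Fin n, lam (Fin.castLE hnν i) with hm
  set S : Set ℝ := {x : ℝ | ∃ f : Fin n → E,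
      Orthonormal ℝ f ∧ x = ∑ i, ⟪A (f i), f i⟫} with hS
  -- indicator of the first n indices
  set χ : Fin (Module.finrank ℝ E) → ℝ := fun k => if (k : ℕ) < n then 1 else 0 with hχ
  have hfil : (Finset.univ.filter fun k : Fin (Module.finrank ℝ E) => (k : ℕ) < n)
      = Finset.univ.map (Fin.castLEEmb hnν) := by
    ext k
    simp only [Finset.mem_filter, Finset.mem_univ, true_and, Finset.mem_map,
      Fin.castLEEmb, Function.Embedding.coeFn_mk]
    constructor
    · intro hk
      exact ⟨⟨(k : ℕ), hk⟩, Fin.ext rfl⟩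
    · rintro ⟨i, -, rfl⟩
      simp [i.isLt]
  have hχsum : ∑ k, χ k = n := by
    simp only [hχ]
    rw [Finset.sum_boole, hfil]
    simp
  have hmχ : ∑ k, lam k * χ k = m := by
    have h1 : ∀ k : Fin (Module.finrank ℝ E), lam k * χ k
        = if (k : ℕ) < n then lam k else 0 := by
      intro k
      simp [hχ, ite_mul, mul_ite]
    rw [Finset.sum_congr rfl fun k _ => h1 k, ← Finset.sum_filter, hfil,
      Finset.sum_map]
    rfl
  -- membership
  have hmem : m ∈ S := by
    refine ⟨F ∘ Fin.castLE hnν, hON.comp _ (Fin.castLE_injective hnν), ?_⟩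
    refine Finset.sum_congr rfl fun i _ => ?_
    simp only [Function.comp_apply]
    rw [heig, real_inner_smul_left, real_inner_self_eq_norm_sq, hON.1, one_pow, mul_one]
  -- lower bound
  have hlb : ∀ y ∈ S, m ≤ y := by
    rintro y ⟨f, hf, rfl⟩
    set t : Fin (Module.finrank ℝ E) → ℝ := fun k => ∑ i, ⟪f i, F k⟫ ^ 2 with ht
    have ht0 : ∀ k, 0 ≤ t k := fun k => Finset.sum_nonneg fun i _ => sq_nonneg _
    have ht1 : ∀ k, t k ≤ 1 := by
      intro k
      have hb1 := hf.sum_inner_products_le (F k) (s := Finset.univ)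
      rw [hON.1 k, one_pow] at hb1
      refine le_trans (le_of_eq ?_) hb1
      refine Finset.sum_congr rfl fun i _ => ?_
      rw [Real.norm_eq_abs, sq_abs]
    have hsum_t : ∑ k, t k = n := by
      simp only [ht]
      rw [Finset.sum_comm]
      have h1 : ∀ i : Fin n, ∑ k, ⟪f i, F k⟫ ^ 2 = 1 := by
        intro i
        rw [hpars, hf.1, one_pow]
      simp [h1]
    have hval : ∑ i, ⟪A (f i), f i⟫ = ∑ k, lam k * t k := by
      rw [Finset.sum_congr rfl fun i (_ : i ∈ Finset.univ) => hexp (f i),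
        Finset.sum_comm]
      exact Finset.sum_congr rfl fun k _ => by rw [ht, Finset.mul_sum]
    have hnν' : n - 1 < Module.finrank ℝ E := lt_of_lt_of_le (Nat.sub_lt hn one_pos) hnν
    set μ : ℝ := lam ⟨n - 1, hnν'⟩ with hμ
    have hterm : ∀ k, 0 ≤ (lam k - μ) * (t k - χ k) := by
      intro k
      by_cases hk : (k : ℕ) < n
      · have h1 : lam k ≤ μ := hmono (by
          simp only [Fin.le_def]
          omega)
        have h2 : t k - χ k ≤ 0 := by
          simp only [hχ, hk, if_true]
          linarith [ht1 k]
        nlinarith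
      · have h1 : μ ≤ lam k := hmono (by
          simp only [Fin.le_def]
          omega)
        have h2 : 0 ≤ t k - χ k := by
          simp only [hχ, hk, if_false]
          linarith [ht0 k]
        nlinarith
    have key : ∑ k, (lam k - μ) * (t k - χ k)
        = ∑ k, lam k * t k - ∑ k, lam k * χ k := by
      have hexpand : ∀ k : Fin (Module.finrank ℝ E), (lam k - μ) * (t k - χ k)
          = lam k * t k - lam k * χ k - μ * t k + μ * χ k := fun k => by ring
      rw [Finset.sum_congr rfl fun k _ => hexpand k]
      rw [Finset.sum_add_distrib, Finset.sum_sub_distrib, Finset.sum_sub_distrib,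
        ← Finset.mul_sum, ← Finset.mul_sum, hsum_t, hχsum]
      ring
    have hge : 0 ≤ ∑ k, lam k * t k - ∑ k, lam k * χ k := by
      rw [← key]
      exact Finset.sum_nonneg fun k _ => hterm k
    rw [hval]
    rw [hmχ] at hge
    linarith
  have hinf : sInf S = m :=
    le_antisymm (csInf_le ⟨m, hlb⟩ hmem) (le_csInf ⟨m, hmem⟩ hlb)
  rw [hinf]
  ring
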